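/- Let (P₀, Q₀) be a pair of orthogonal projections in generic position on H, set A = P₀ - Q₀, and let V₀ be the Davis symmetry of (P₀, Q₀), i.e., the symmetry commuting with P₀ + Q₀ - 1 such that V₀(P₀ + Q₀ - 1) is positive. Let Z₁, Z₂ ∈ B(H) satisfy Zᵢ* = -Zᵢ, Zᵢ A = A Zᵢ, Zᵢ V₀ = -V₀ Zᵢ, and ‖Zᵢ‖ < π/2 for i = 1, 2. If exp(Z₁) P₀ exp(-Z₁) = exp(Z₂) P₀ exp(-Z₂) and exp(Z₁) Q₀ exp(-Z₁) = exp(Z₂) Q₀ exp(-Z₂), then Z₁ = Z₂. -/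

import Mathlib

open ContinuousLinearMap

variable {H : Type*} [NormedAddCommGroup H] [InnerProductSpace ℂ H] [CompleteSpace H]

/-- An orthogonal projection: a selfadjoint idempotent bounded operator. -/
def IsOrthogonalProjection (P : H →L[ℂ] H) : Prop :=
  IsSelfAdjoint P ∧ P * P = P

/-- A symmetry: a selfadjoint unitary operator. -/
def IsSymmetry (V : H →L[ℂ] H) : Prop :=
  IsSelfAdjoint V ∧ V * V = 1

/-- Two orthogonal projections are in generic position if the four canonical
intersections of their ranges and kernels are trivial. -/
def GenericPosition (P Q : H →L[ℂ] H) : Prop :=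
  LinearMap.range (P : H →ₗ[ℂ] H) ⊓ LinearMap.range (Q : H →ₗ[ℂ] H) = ⊥ ∧
  LinearMap.range (P : H →ₗ[ℂ] H) ⊓ LinearMap.ker (Q : H →ₗ[ℂ] H) = ⊥ ∧
  LinearMap.ker (P : H →ₗ[ℂ] H) ⊓ LinearMap.range (Q : H →ₗ[ℂ] H) = ⊥ ∧
  LinearMap.ker (P : H →ₗ[ℂ] H) ⊓ LinearMap.ker (Q : H →ₗ[ℂ] H) = ⊥


set_option maxHeartbeats 1000000
set_option synthInstance.maxHeartbeats 400000

lemma skew_spectrum [Nontrivial H] {Y : H →L[ℂ] H} (hs : star Y = -Y) (hn : ‖Y‖ < Real.pi)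
    {z : ℂ} (hz : z ∈ spectrum ℂ Y) : z.re = 0 ∧ |z.im| < Real.pi := by
  have hS : IsSelfAdjoint (Complex.I • Y) := by
    rw [IsSelfAdjoint, star_smul, hs]
    simp
  have hre : z.re = 0 := by
    have hI : (Complex.I) • z ∈ spectrum ℂ (Complex.I • Y) := by
      have hu : IsUnit (Complex.I) := isUnit_iff_ne_zero.mpr Complex.I_ne_zero
      obtain ⟨u, hu⟩ := hu
      rw [← hu, ← Units.smul_def, spectrum.unit_smul_eq_smul]
      exact ⟨z, hz, rfl⟩
    have := hS.mem_spectrum_eq_re hI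
    have him : (Complex.I • z).im = 0 := by rw [this]; simp
    simpa using him
  refine ⟨hre, ?_⟩
  have h1 : ‖z‖ ≤ ‖Y‖ := spectrum.norm_le_norm_of_mem hz
  have h2 : |z.im| ≤ ‖z‖ := Complex.abs_im_le_norm z
  calc |z.im| ≤ ‖z‖ := h2
    _ ≤ ‖Y‖ := h1
    _ < Real.pi := hn

lemma log_exp_skew [Nontrivial H] {Y : H →L[ℂ] H} (hs : star Y = -Y) (hn : ‖Y‖ < Real.pi) :
    cfc Complex.log (NormedSpace.exp Y) = Y := by
  have hY : IsStarNormal Y := ⟨by rw [hs]; exact (Commute.refl Y).neg_left⟩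
  rw [← CFC.complex_exp_eq_normedSpace_exp hY]
  have hcont : ContinuousOn Complex.log (Complex.exp '' spectrum ℂ Y) := by
    intro w hw
    obtain ⟨z, hz, rfl⟩ := hw
    obtain ⟨hre, him⟩ := skew_spectrum hs hn hz
    have hslit : Complex.exp z ∈ Complex.slitPlane := by
      rw [Complex.mem_slitPlane_iff]
      by_cases hsin : Real.sin z.im = 0
      · left
        have : z.im = 0 := (Real.sin_eq_zero_iff_of_lt_of_lt
          (by linarith [abs_lt.mp him]) (abs_lt.mp him).2).mp hsin
        rw [Complex.exp_re, hre, this]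
        simp [Real.exp_zero]
      · right
        rw [Complex.exp_im, hre]
        simp [Real.exp_zero, hsin]
    exact (continuousAt_clog hslit).continuousWithinAt
  rw [← cfc_comp' Complex.log Complex.exp Y hcont (Complex.continuous_exp.continuousOn)]
  conv_rhs => rw [← cfc_id ℂ Y hY]
  apply cfc_congr
  intro z hz
  obtain ⟨hre, him⟩ := skew_spectrum hs hn hz
  have := abs_lt.mp him
  exact Complex.log_exp (by linarith [abs_lt.mp him]) (by linarith [abs_lt.mp him])

lemma exp_inj_skew {Y₁ Y₂ : H →L[ℂ] H} (h₁ : star Y₁ = -Y₁) (h₂ : star Y₂ = -Y₂)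
    (n₁ : ‖Y₁‖ < Real.pi) (n₂ : ‖Y₂‖ < Real.pi)
    (h : NormedSpace.exp Y₁ = NormedSpace.exp Y₂) : Y₁ = Y₂ := by
  rcases subsingleton_or_nontrivial H with hH | hH
  · exact Subsingleton.elim _ _
  rw [← log_exp_skew h₁ n₁, ← log_exp_skew h₂ n₂, h]

/-- Uniqueness of geodesics: two horizontal exponents of norm `< π/2`
(anti-Hermitian, commuting with `A = P₀ - Q₀`, anticommuting with the Davis symmetry `V₀`)
carrying `(P₀,Q₀)` to the same pair must coincide. -/
theorem horizontal_exponent_unique (P₀ Q₀ V₀ Z₁ Z₂ : H →L[ℂ] H)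
    (hP₀ : IsOrthogonalProjection P₀) (hQ₀ : IsOrthogonalProjection Q₀)
    (hgen : GenericPosition P₀ Q₀)
    (hV₀ : IsSymmetry V₀) (hV₀c : Commute V₀ (P₀ + Q₀ - 1))
    (hV₀p : (V₀ * (P₀ + Q₀ - 1)).IsPositive)
    (hZ₁s : star Z₁ = -Z₁) (hZ₁A : Z₁ * (P₀ - Q₀) = (P₀ - Q₀) * Z₁)
    (hZ₁V : Z₁ * V₀ = -(V₀ * Z₁)) (hZ₁n : ‖Z₁‖ < Real.pi / 2)
    (hZ₂s : star Z₂ = -Z₂) (hZ₂A : Z₂ * (P₀ - Q₀) = (P₀ - Q₀) * Z₂)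
    (hZ₂V : Z₂ * V₀ = -(V₀ * Z₂)) (hZ₂n : ‖Z₂‖ < Real.pi / 2)
    (hexpP : NormedSpace.exp Z₁ * P₀ * NormedSpace.exp (-Z₁) =
      NormedSpace.exp Z₂ * P₀ * NormedSpace.exp (-Z₂))
    (hexpQ : NormedSpace.exp Z₁ * Q₀ * NormedSpace.exp (-Z₁) =
      NormedSpace.exp Z₂ * Q₀ * NormedSpace.exp (-Z₂)) :
    Z₁ = Z₂ := by
  let +nondep : NormedAlgebra ℚ (H →L[ℂ] H) := .restrictScalars ℚ ℂ (H →L[ℂ] H)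
  set e : (H →L[ℂ] H) → (H →L[ℂ] H) := NormedSpace.exp with he
  -- basic exponential inverse facts
  have hinv : ∀ Z : H →L[ℂ] H, e Z * e (-Z) = 1 := fun Z => by
    rw [he, ← NormedSpace.exp_add_of_commute ((Commute.refl Z).neg_right)]
    simp
  have hinv' : ∀ Z : H →L[ℂ] H, e (-Z) * e Z = 1 := fun Z => by
    rw [he, ← NormedSpace.exp_add_of_commute ((Commute.refl Z).neg_left)]
    simp
  obtain ⟨u, hu⟩ : ∃ u : H →L[ℂ] H, u = e (-Z₂) * e Z₁ := ⟨_, rfl⟩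
  obtain ⟨B, hB⟩ : ∃ B : H →L[ℂ] H, B = P₀ + Q₀ - 1 := ⟨_, rfl⟩
  rw [← hB] at hV₀c hV₀p
  have key : ∀ R : H →L[ℂ] H, e Z₁ * R * e (-Z₁) = e Z₂ * R * e (-Z₂) → u * R = R * u := by
    intro R hR
    have h1 := hinv' Z₁
    have h2 := hinv' Z₂
    calc u * R = e (-Z₂) * (e Z₁ * R * e (-Z₁)) * e Z₁ := by
          simp only [hu, mul_assoc, h1, mul_one]
      _ = e (-Z₂) * (e Z₂ * R * e (-Z₂)) * e Z₁ := by rw [hR]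
      _ = R * u := by
          simp only [← mul_assoc]
          rw [h2, one_mul, mul_assoc, ← hu]
  have huP : u * P₀ = P₀ * u := key P₀ hexpP
  have huQ : u * Q₀ = Q₀ * u := key Q₀ hexpQ
  have huB : u * B = B * u := by
    rw [hB, mul_sub, sub_mul, mul_add, add_mul, huP, huQ, mul_one, one_mul]
  have hustar : star u = e (-Z₁) * e Z₂ := by
    rw [hu, star_mul, he, NormedSpace.star_exp, NormedSpace.star_exp, hZ₁s, star_neg, hZ₂s,
      neg_neg]
  have huu : u * star u = 1 := by
    rw [hustar, hu]
    calc e (-Z₂) * e Z₁ * (e (-Z₁) * e Z₂) = e (-Z₂) * (e Z₁ * e (-Z₁) * e Z₂) := by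
          simp only [mul_assoc]
      _ = 1 := by rw [hinv Z₁, one_mul, hinv' Z₂]
  have husu : star u * u = 1 := by
    rw [hustar, hu]
    calc e (-Z₁) * e Z₂ * (e (-Z₂) * e Z₁) = e (-Z₁) * (e Z₂ * e (-Z₂) * e Z₁) := by
          simp only [mul_assoc]
      _ = 1 := by rw [hinv Z₂, one_mul, hinv' Z₁]
  have hBsa : star B = B := by
    rw [hB]
    simp [star_sub, star_add, hP₀.1.star_eq, hQ₀.1.star_eq]
  -- V₀ * B is the positive square root of B * B
  have hT0 : (0 : H →L[ℂ] H) ≤ V₀ * B := (nonneg_iff_isPositive _).mpr hV₀p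
  have hTT : (V₀ * B) * (V₀ * B) = B * B := by
    calc V₀ * B * (V₀ * B) = V₀ * (B * V₀) * B := by noncomm_ring
      _ = V₀ * (V₀ * B) * B := by rw [← hV₀c.eq]
      _ = V₀ * V₀ * (B * B) := by noncomm_ring
      _ = B * B := by rw [hV₀.2, one_mul]
  have hsqrtT : CFC.sqrt (B * B) = V₀ * B := CFC.sqrt_unique hTT hT0
  have hBBu : u * (B * B) = (B * B) * u := by
    rw [← mul_assoc, huB, mul_assoc, huB, ← mul_assoc]
  have hw0 : (0 : H →L[ℂ] H) ≤ u * (V₀ * B) * star u := by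
    simpa [star_star, mul_assoc] using star_left_conjugate_nonneg hT0 (star u)
  have hww : (u * (V₀ * B) * star u) * (u * (V₀ * B) * star u) = B * B := by
    calc (u * (V₀ * B) * star u) * (u * (V₀ * B) * star u)
        = u * (V₀ * B) * (star u * u) * ((V₀ * B) * star u) := by noncomm_ring
      _ = u * ((V₀ * B) * (V₀ * B)) * star u := by rw [husu]; noncomm_ring
      _ = u * (B * B) * star u := by rw [hTT]
      _ = B * B * (u * star u) := by rw [hBBu, mul_assoc]
      _ = B * B := by rw [huu, mul_one]
  have hTw : V₀ * B = u * (V₀ * B) * star u :=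
    hsqrtT.symm.trans (CFC.sqrt_unique hww hw0)
  have huT : u * (V₀ * B) = (V₀ * B) * u := by
    calc u * (V₀ * B) = u * (V₀ * B) * (star u * u) := by rw [husu, mul_one]
      _ = (u * (V₀ * B) * star u) * u := by rw [← mul_assoc]
      _ = (V₀ * B) * u := by rw [← hTw]
  -- B is injective
  have hBinj : ∀ x : H, B x = 0 → x = 0 := by
    intro x hx
    have hx' : P₀ x + Q₀ x - x = 0 := by
      simpa [hB, ContinuousLinearMap.sub_apply, ContinuousLinearMap.add_apply] using hx
    have hsum : P₀ x + Q₀ x = x := by rwa [sub_eq_zero] at hx'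
    have hQQ : Q₀ (Q₀ x) = Q₀ x := by
      calc Q₀ (Q₀ x) = (Q₀ * Q₀) x := rfl
        _ = Q₀ x := by rw [hQ₀.2]
    have hPP : P₀ (P₀ x) = P₀ x := by
      calc P₀ (P₀ x) = (P₀ * P₀) x := rfl
        _ = P₀ x := by rw [hP₀.2]
    have h1 : Q₀ (P₀ x) = 0 := by
      have hPx_eq : P₀ x = x - Q₀ x := eq_sub_of_add_eq hsum
      rw [hPx_eq, map_sub, hQQ, sub_self]
    have h2 : P₀ (Q₀ x) = 0 := by
      have hQx_eq : Q₀ x = x - P₀ x := eq_sub_of_add_eq (by rw [add_comm] at hsum; exact hsum)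
      rw [hQx_eq, map_sub, hPP, sub_self]
    have hPx0 : P₀ x = 0 := by
      have hmem : P₀ x ∈ LinearMap.range (P₀ : H →ₗ[ℂ] H) ⊓ LinearMap.ker (Q₀ : H →ₗ[ℂ] H) :=
        Submodule.mem_inf.mpr ⟨LinearMap.mem_range_self _ x, LinearMap.mem_ker.mpr h1⟩
      rw [hgen.2.1] at hmem
      simpa using hmem
    have hQx0 : Q₀ x = 0 := by
      have hmem : Q₀ x ∈ LinearMap.ker (P₀ : H →ₗ[ℂ] H) ⊓ LinearMap.range (Q₀ : H →ₗ[ℂ] H) :=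
        Submodule.mem_inf.mpr ⟨LinearMap.mem_ker.mpr h2, LinearMap.mem_range_self _ x⟩
      rw [hgen.2.2.1] at hmem
      simpa using hmem
    rw [← hsum, hPx0, hQx0, add_zero]
  -- u commutes with V₀
  have hDB : (u * V₀ - V₀ * u) * B = 0 := by
    have h1 : u * V₀ * B = V₀ * u * B := by
      calc u * V₀ * B = u * (V₀ * B) := by rw [mul_assoc]
        _ = (V₀ * B) * u := huT
        _ = V₀ * (u * B) := by rw [mul_assoc, ← huB]
        _ = V₀ * u * B := by rw [← mul_assoc]
    rw [sub_mul, h1, sub_self]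
  have hBD : B * (u * V₀ - V₀ * u) = 0 := by
    have h2 : B * (u * V₀) = (u * V₀) * B := by
      calc B * (u * V₀) = (B * u) * V₀ := by rw [mul_assoc]
        _ = (u * B) * V₀ := by rw [huB]
        _ = u * (B * V₀) := by rw [mul_assoc]
        _ = u * (V₀ * B) := by rw [← hV₀c.eq]
        _ = (u * V₀) * B := by rw [mul_assoc]
    have h3 : B * (V₀ * u) = (V₀ * u) * B := by
      calc B * (V₀ * u) = (B * V₀) * u := by rw [mul_assoc]
        _ = (V₀ * B) * u := by rw [← hV₀c.eq]
        _ = V₀ * (B * u) := by rw [mul_assoc]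
        _ = V₀ * (u * B) := by rw [huB]
        _ = (V₀ * u) * B := by rw [mul_assoc]
    rw [mul_sub, h2, h3, ← sub_mul, hDB]
  have huV : u * V₀ = V₀ * u := by
    have hD0 : u * V₀ - V₀ * u = 0 := by
      ext x
      have hBx : B ((u * V₀ - V₀ * u) x) = 0 := by
        have := DFunLike.congr_fun hBD x
        simpa [ContinuousLinearMap.mul_apply] using this
      simpa using hBinj _ hBx
    exact sub_eq_zero.mp hD0
  -- anticommutation with V₀ conjugates exponentials
  have hVe : ∀ Z : H →L[ℂ] H, Z * V₀ = -(V₀ * Z) → V₀ * e Z = e (-Z) * V₀ := by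
    intro Z hZ
    have hyZ : V₀ * Z * V₀ = -Z := by
      rw [mul_assoc, hZ, mul_neg, ← mul_assoc, hV₀.2, one_mul]
    have hconj := NormedSpace.exp_units_conj
      (⟨V₀, V₀, hV₀.2, hV₀.2⟩ : (H →L[ℂ] H)ˣ) Z
    simp only [Units.inv_mk] at hconj
    have hconj' : NormedSpace.exp (V₀ * Z * V₀) = V₀ * NormedSpace.exp Z * V₀ := hconj
    rw [hyZ] at hconj'
    have : e (-Z) = V₀ * e Z * V₀ := hconj'
    calc V₀ * e Z = V₀ * e Z * (V₀ * V₀) := by rw [hV₀.2, mul_one]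
      _ = (V₀ * e Z * V₀) * V₀ := by rw [← mul_assoc]
      _ = e (-Z) * V₀ := by rw [← this]
  have hV1 : V₀ * e Z₁ = e (-Z₁) * V₀ := hVe Z₁ hZ₁V
  have hV2' : V₀ * e (-Z₂) = e Z₂ * V₀ := by
    have h : (-Z₂) * V₀ = -(V₀ * (-Z₂)) := by
      rw [neg_mul, hZ₂V, neg_neg, mul_neg, neg_neg]
    have := hVe (-Z₂) h
    rwa [neg_neg] at this
  have key2 : e (-Z₂) * e Z₁ = e Z₂ * e (-Z₁) := by
    have hR : V₀ * u = e Z₂ * e (-Z₁) * V₀ := by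
      rw [hu, ← mul_assoc, hV2', mul_assoc, hV1, ← mul_assoc]
    have hEq : e (-Z₂) * e Z₁ * V₀ = e Z₂ * e (-Z₁) * V₀ := by
      rw [← hR, ← huV, hu]
    have := congrArg (fun X => X * V₀) hEq
    simpa [mul_assoc, hV₀.2] using this
  have key3 : e Z₁ * e Z₁ = e Z₂ * e Z₂ := by
    calc e Z₁ * e Z₁ = (e Z₂ * e (-Z₂)) * e Z₁ * e Z₁ := by rw [hinv Z₂, one_mul]
      _ = e Z₂ * ((e (-Z₂) * e Z₁) * e Z₁) := by simp only [mul_assoc]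
      _ = e Z₂ * ((e Z₂ * e (-Z₁)) * e Z₁) := by rw [key2]
      _ = e Z₂ * (e Z₂ * (e (-Z₁) * e Z₁)) := by simp only [mul_assoc]
      _ = e Z₂ * e Z₂ := by rw [hinv' Z₁, mul_one]
  have key4 : NormedSpace.exp (Z₁ + Z₁) = NormedSpace.exp (Z₂ + Z₂) := by
    rw [NormedSpace.exp_add_of_commute (Commute.refl Z₁),
      NormedSpace.exp_add_of_commute (Commute.refl Z₂)]
    exact key3
  have hY1 : star (Z₁ + Z₁) = -(Z₁ + Z₁) := by rw [star_add, hZ₁s, neg_add]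
  have hY2 : star (Z₂ + Z₂) = -(Z₂ + Z₂) := by rw [star_add, hZ₂s, neg_add]
  have hn1 : ‖Z₁ + Z₁‖ < Real.pi := lt_of_le_of_lt (norm_add_le _ _) (by linarith)
  have hn2 : ‖Z₂ + Z₂‖ < Real.pi := lt_of_le_of_lt (norm_add_le _ _) (by linarith)
  have hfin : Z₁ + Z₁ = Z₂ + Z₂ := exp_inj_skew hY1 hY2 hn1 hn2 key4
  have h2 : (2 : ℂ) • Z₁ = (2 : ℂ) • Z₂ := by rw [two_smul, two_smul]; exact hfin
  exact smul_right_injective _ two_ne_zero h2
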